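/- Let A be a bounded selfadjoint operator on a complex Hilbert space H with spectrum contained in [m,M], and let f, g : [m,M] → ℝ be continuous and synchronous, i.e., (f(t)-f(s))(g(t)-g(s)) ≥ 0 for all t,s ∈ [m,M]. Then for every unit vector x ∈ H, ⟨f(A)g(A)x,x⟩ ≥ ⟨f(A)x,x⟩⟨g(A)x,x⟩. If f, g are asynchronous (the product is ≤ 0), the reverse inequality holds. -/

import Mathlib

private lemma cheb_aux
    {H : Type*} [NormedAddCommGroup H] [InnerProductSpace ℂ H] [CompleteSpace H]
    (m M : ℝ) (A : H →L[ℂ] H) (hA : IsSelfAdjoint A)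
    (hsp : spectrum ℝ A ⊆ Set.Icc m M)
    (f g : ℝ → ℝ) (hfc : ContinuousOn f (Set.Icc m M)) (hgc : ContinuousOn g (Set.Icc m M))
    (hsync : ∀ t ∈ Set.Icc m M, ∀ s ∈ Set.Icc m M, 0 ≤ (f t - f s) * (g t - g s))
    (x : H) (hx : ‖x‖ = 1) :
    (inner ℂ ((cfc f A) x) x : ℂ).re * (inner ℂ ((cfc g A) x) x : ℂ).re ≤
      (inner ℂ ((cfc f A * cfc g A) x) x : ℂ).re := by
  have hfs : ContinuousOn f (spectrum ℝ A) := hfc.mono hsp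
  have hgs : ContinuousOn g (spectrum ℝ A) := hgc.mono hsp
  set φ : (H →L[ℂ] H) → ℝ := fun T => (inner ℂ (T x) x : ℂ).re with hφ
  -- positivity of the vector state
  have φ_nonneg : ∀ T : H →L[ℂ] H, 0 ≤ T → 0 ≤ φ T := by
    intro T hT
    have := ((ContinuousLinearMap.nonneg_iff_isPositive T).mp hT).inner_nonneg_left x
    open ComplexOrder in
    have h' : (0 : ℂ) ≤ inner ℂ (T x) x := by simpa [ContinuousLinearMap.reApplyInnerSelf] using this
    open ComplexOrder in
    exact (Complex.nonneg_iff.mp h').1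
  have hx1 : (inner ℂ x x : ℂ).re = 1 := by
    have := inner_self_eq_norm_sq (𝕜 := ℂ) x
    simpa [hx] using this
  set c : ℝ := φ (cfc f A) with hc
  set d : ℝ := φ (cfc g A) with hd
  set P : ℝ := φ (cfc (fun t => f t * g t) A) with hP
  -- the key linear expansion of the state applied to the cfc of a shifted product
  have key : ∀ a b e : ℝ,
      φ (cfc (fun t => (f t - a) * (g t - b) + e) A)
        = P - b * c - a * d + (a * b + e) := by
    intro a b e
    have hfun : (fun t => (f t - a) * (g t - b) + e)
        = fun t => (f t * g t - (b * f t + a * g t)) + (a * b + e) := by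
      funext t; ring
    have h1 : ContinuousOn (fun t => f t * g t) (spectrum ℝ A) := hfs.mul hgs
    have h2f : ContinuousOn (fun t => b * f t) (spectrum ℝ A) := hfs.const_smul b
    have h2g : ContinuousOn (fun t => a * g t) (spectrum ℝ A) := hgs.const_smul a
    have h2 : ContinuousOn (fun t => b * f t + a * g t) (spectrum ℝ A) := h2f.add h2g
    have h3 : ContinuousOn (fun t : ℝ => f t * g t - (b * f t + a * g t)) (spectrum ℝ A) :=
      h1.sub h2
    rw [hfun, cfc_add A _ _ h3 (continuousOn_const),
      cfc_sub _ _ A h1 h2, cfc_add A _ _ h2f h2g,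
      cfc_const_mul b f A hfs, cfc_const_mul a g A hgs, cfc_const _ A hA,
      Algebra.algebraMap_eq_smul_one]
    simp only [φ, ContinuousLinearMap.add_apply, ContinuousLinearMap.sub_apply,
      ContinuousLinearMap.smul_apply, ContinuousLinearMap.one_apply,
      inner_add_left, inner_sub_left,
      RCLike.real_smul_eq_coe_smul (K := ℂ), inner_smul_left, Complex.conj_ofReal,
      RCLike.conj_ofReal, map_ofNat, Complex.conj_re, Complex.conj_im,
      Complex.mul_re, Complex.ofReal_re, Complex.ofReal_im, Complex.sub_re, Complex.add_re,
      zero_mul, sub_zero, Complex.coe_algebraMap, Complex.ofReal_re, Complex.ofReal_im]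
    rw [hx1]
    simp only [hc, hd, hP, hφ, zero_mul, mul_zero, sub_zero, mul_one]
    ring
  -- step 1: pointwise nonnegativity of the auxiliary function G
  have hG : ∀ s ∈ Set.Icc m M, 0 ≤ (f s - c) * (g s - d) + (P - c * d) := by
    intro s hs
    have hpos : (0 : H →L[ℂ] H) ≤ cfc (fun t => (f t - f s) * (g t - g s) + 0) A := by
      apply cfc_nonneg
      intro t ht
      simpa using hsync t (hsp ht) s hs
    have h0 := φ_nonneg _ hpos
    rw [key (f s) (g s) 0] at h0
    have : (f s - c) * (g s - d) + (P - c * d)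
        = P - g s * c - f s * d + (f s * g s + 0) := by ring
    rw [this]; linarith
  -- step 2: apply the state to G
  have hpos2 : (0 : H →L[ℂ] H) ≤ cfc (fun s => (f s - c) * (g s - d) + (P - c * d)) A := by
    apply cfc_nonneg
    intro s hs
    exact hG s (hsp hs)
  have h2 := φ_nonneg _ hpos2
  rw [key c d (P - c * d)] at h2
  have hmul : cfc (fun t => f t * g t) A = cfc f A * cfc g A := cfc_mul f g A hfs hgs
  have : φ (cfc f A * cfc g A) = P := by rw [hP, hmul]
  rw [show (inner ℂ ((cfc f A * cfc g A) x) x : ℂ).re = φ (cfc f A * cfc g A) from rfl, this]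
  linarith

theorem chebyshev_operator
    {H : Type*} [NormedAddCommGroup H] [InnerProductSpace ℂ H] [CompleteSpace H]
    (m M : ℝ) (A : H →L[ℂ] H) (hA : IsSelfAdjoint A)
    (hsp : spectrum ℝ A ⊆ Set.Icc m M)
    (f g : ℝ → ℝ) (hfc : ContinuousOn f (Set.Icc m M)) (hgc : ContinuousOn g (Set.Icc m M)) :
    ((∀ t ∈ Set.Icc m M, ∀ s ∈ Set.Icc m M, 0 ≤ (f t - f s) * (g t - g s)) →
      ∀ x : H, ‖x‖ = 1 →
        (inner ℂ ((cfc f A * cfc g A) x) x : ℂ).re ≥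
          (inner ℂ ((cfc f A) x) x : ℂ).re * (inner ℂ ((cfc g A) x) x : ℂ).re) ∧
    ((∀ t ∈ Set.Icc m M, ∀ s ∈ Set.Icc m M, (f t - f s) * (g t - g s) ≤ 0) →
      ∀ x : H, ‖x‖ = 1 →
        (inner ℂ ((cfc f A * cfc g A) x) x : ℂ).re ≤
          (inner ℂ ((cfc f A) x) x : ℂ).re * (inner ℂ ((cfc g A) x) x : ℂ).re) := by
  constructor
  · intro hsync x hx
    exact cheb_aux m M A hA hsp f g hfc hgc hsync x hx
  · intro hasync x hx
    have hgc' : ContinuousOn (fun t => -g t) (Set.Icc m M) := hgc.neg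
    have hsync' : ∀ t ∈ Set.Icc m M, ∀ s ∈ Set.Icc m M,
        0 ≤ (f t - f s) * ((fun t => -g t) t - (fun t => -g t) s) := by
      intro t ht s hs
      have := hasync t ht s hs
      show 0 ≤ (f t - f s) * (-g t - -g s)
      nlinarith
    have h := cheb_aux m M A hA hsp f (fun t => -g t) hfc hgc' hsync' x hx
    have hgs : ContinuousOn g (spectrum ℝ A) := hgc.mono hsp
    have hneg : cfc (fun t => -g t) A = -(cfc g A) := cfc_neg g A
    rw [hneg] at h
    simp only [mul_neg, ContinuousLinearMap.neg_apply, inner_neg_left, Complex.neg_re,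
      ContinuousLinearMap.mul_apply, mul_neg, neg_neg] at h ⊢
    -- h should now read : c * (-d) ≤ -(...)
    linarith
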